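/- Let d ≥ 1. Let Λ be a linear map from d×d complex matrices to d×d complex matrices that is positive (it maps positive semidefinite matrices to positive semidefinite matrices) and trace-preserving (tr Λ(A) = tr A for all A). Let P and R be d×d Hermitian matrices with tr(R) = 1. Then Re tr(P · Λ(R)) ≥ (1/2)·[λ_min(P)·(‖R‖₁ + 1) − λ_max(P)·(‖R‖₁ − 1)], where ‖R‖₁ denotes the sum of the absolute values of the eigenvalues of R, and λ_min(P), λ_max(P) denote the minimal and maximal eigenvalues of P. -/

import Mathlib

open scoped ComplexOrder

open Matrix in
private lemma trace_unitary_conj {n : Type*} [Fintype n] [DecidableEq n]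
    (U : Matrix.unitaryGroup n ℂ) (D : Matrix n n ℂ) :
    ((U : Matrix n n ℂ) * D * star (U : Matrix n n ℂ)).trace = D.trace := by
  rw [Matrix.trace_mul_cycle, Matrix.UnitaryGroup.star_mul_self, Matrix.one_mul]

open Matrix in
private lemma psd_trace_nonneg {n : Type*} [Fintype n] [DecidableEq n]
    {M : Matrix n n ℂ} (h : M.PosSemidef) : 0 ≤ M.trace := by
  have hH := h.1
  rw [hH.spectral_theorem, Unitary.conjStarAlgAut_apply, trace_unitary_conj, Matrix.trace_diagonal]
  refine Finset.sum_nonneg fun i _ => ?_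
  simpa using Complex.zero_le_real.mpr (h.eigenvalues_nonneg i)

open Matrix in
private lemma psd_mul_trace_nonneg {n : Type*} [Fintype n] [DecidableEq n]
    {A B : Matrix n n ℂ} (hA : A.PosSemidef) (hB : B.PosSemidef) :
    0 ≤ (A * B).trace := by
  open scoped MatrixOrder in
  have hS : (CFC.sqrt B).PosSemidef := (CFC.sqrt_nonneg B).posSemidef
  have h1 : A * B = A * CFC.sqrt B * CFC.sqrt B := by
    open scoped MatrixOrder in rw [Matrix.mul_assoc, CFC.sqrt_mul_sqrt_self B hB.nonneg]
  rw [h1, Matrix.trace_mul_cycle]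
  have := hA.conjTranspose_mul_mul_same (CFC.sqrt B)
  rw [hS.1] at this
  exact psd_trace_nonneg this

open Matrix in
private lemma psd_conj {n : Type*} [Fintype n] [DecidableEq n]
    (U : Matrix n n ℂ) {v : n → ℂ} (hv : ∀ i, 0 ≤ v i) :
    (U * Matrix.diagonal v * star U).PosSemidef := by
  rw [Matrix.star_eq_conjTranspose]
  exact (Matrix.posSemidef_diagonal_iff.mpr hv).mul_mul_conjTranspose_same U

open Matrix in
private lemma shift_eq {n : Type*} [Fintype n] [DecidableEq n]
    {P : Matrix n n ℂ} (hP : P.IsHermitian) (c : ℝ) :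
    P - (c : ℂ) • 1 = (hP.eigenvectorUnitary : Matrix n n ℂ) *
      Matrix.diagonal (fun i => ((hP.eigenvalues i - c : ℝ) : ℂ)) *
      star (hP.eigenvectorUnitary : Matrix n n ℂ) := by
  set U := (hP.eigenvectorUnitary : Matrix n n ℂ)
  have hU : U * star U = 1 := Matrix.mem_unitaryGroup_iff.mp hP.eigenvectorUnitary.2
  have h1 : Matrix.diagonal (fun i => ((hP.eigenvalues i - c : ℝ) : ℂ)) =
      Matrix.diagonal (RCLike.ofReal ∘ hP.eigenvalues) - (c : ℂ) • 1 := by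
    rw [Matrix.smul_one_eq_diagonal, Matrix.diagonal_sub]
    have h2 : (fun i => ((hP.eigenvalues i - c : ℝ) : ℂ))
        = fun i => (RCLike.ofReal ∘ hP.eigenvalues) i - (c : ℂ) := by
      funext i
      rw [Complex.ofReal_sub]
      rfl
    rw [h2]
  rw [h1, Matrix.mul_sub, Matrix.sub_mul]
  congr 1
  · exact hP.spectral_theorem
  · rw [Matrix.mul_smul, Matrix.mul_one, Matrix.smul_mul, hU]

open Matrix in
private lemma shift_eq' {n : Type*} [Fintype n] [DecidableEq n]
    {P : Matrix n n ℂ} (hP : P.IsHermitian) (c : ℝ) :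
    (c : ℂ) • 1 - P = (hP.eigenvectorUnitary : Matrix n n ℂ) *
      Matrix.diagonal (fun i => ((c - hP.eigenvalues i : ℝ) : ℂ)) *
      star (hP.eigenvectorUnitary : Matrix n n ℂ) := by
  have h3 : (c : ℂ) • 1 - P = -(P - (c : ℂ) • 1) := (neg_sub _ _).symm
  have h4 : (fun i => -((hP.eigenvalues i - c : ℝ) : ℂ))
      = (fun i => ((c - hP.eigenvalues i : ℝ) : ℂ)) := by
    funext i; push_cast; ring
  rw [h3, shift_eq hP c, ← Matrix.neg_mul, ← Matrix.mul_neg, Matrix.diagonal_neg, h4]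

open Matrix in
private lemma trace_bound_low {n : Type*} [Fintype n] [DecidableEq n] [Nonempty n]
    {P σ : Matrix n n ℂ} (hP : P.IsHermitian) (hσ : σ.PosSemidef) :
    (⨅ i, hP.eigenvalues i) * σ.trace.re ≤ ((P * σ).trace).re := by
  set c := ⨅ i, hP.eigenvalues i with hc
  have hPc : (P - (c : ℂ) • 1).PosSemidef := by
    rw [shift_eq hP c]
    refine psd_conj _ fun i => ?_
    refine Complex.zero_le_real.mpr (sub_nonneg.mpr ?_)
    exact ciInf_le (Set.finite_range _).bddBelow i
  have h0 : 0 ≤ ((P - (c : ℂ) • 1) * σ).trace := psd_mul_trace_nonneg hPc hσ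
  rw [Matrix.sub_mul, Matrix.smul_mul, Matrix.one_mul, Matrix.trace_sub, Matrix.trace_smul] at h0
  have h1 := (Complex.le_def.mp h0).1
  simp only [Complex.zero_re, Complex.sub_re, Complex.smul_re, Complex.ofReal_re] at h1
  have hre : ((c : ℂ) • σ.trace).re = c * σ.trace.re := by
    rw [smul_eq_mul, Complex.re_ofReal_mul]
  rw [hre] at h1
  linarith

open Matrix in
private lemma trace_bound_high {n : Type*} [Fintype n] [DecidableEq n] [Nonempty n]
    {P σ : Matrix n n ℂ} (hP : P.IsHermitian) (hσ : σ.PosSemidef) :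
    ((P * σ).trace).re ≤ (⨆ i, hP.eigenvalues i) * σ.trace.re := by
  set C := ⨆ i, hP.eigenvalues i with hC
  have hPc : ((C : ℂ) • 1 - P).PosSemidef := by
    rw [shift_eq' hP C]
    refine psd_conj _ fun i => ?_
    refine Complex.zero_le_real.mpr (sub_nonneg.mpr ?_)
    exact le_ciSup (Set.finite_range _).bddAbove i
  have h0 : 0 ≤ (((C : ℂ) • 1 - P) * σ).trace := psd_mul_trace_nonneg hPc hσ
  rw [Matrix.sub_mul, Matrix.smul_mul, Matrix.one_mul, Matrix.trace_sub, Matrix.trace_smul] at h0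
  have h1 := (Complex.le_def.mp h0).1
  simp only [Complex.zero_re, Complex.sub_re] at h1
  have hre : ((C : ℂ) • σ.trace).re = C * σ.trace.re := by
    rw [smul_eq_mul, Complex.re_ofReal_mul]
  rw [hre] at h1
  linarith

/-- If `Λ` is a positive trace-preserving linear map on `d×d` complex matrices,
`P` and `R` are Hermitian with `tr R = 1`, then
`Re tr(P·Λ(R)) ≥ (1/2)[λ_min(P)(‖R‖₁ + 1) − λ_max(P)(‖R‖₁ − 1)]`,
where `‖R‖₁` is the sum of the absolute values of the eigenvalues of `R`. -/
theorem stmt_10 (d : ℕ) (hd : 1 ≤ d)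
    (Λ : Matrix (Fin d) (Fin d) ℂ →ₗ[ℂ] Matrix (Fin d) (Fin d) ℂ)
    (hpos : ∀ A : Matrix (Fin d) (Fin d) ℂ, A.PosSemidef → (Λ A).PosSemidef)
    (htp : ∀ A : Matrix (Fin d) (Fin d) ℂ, (Λ A).trace = A.trace)
    (P R : Matrix (Fin d) (Fin d) ℂ)
    (hP : P.IsHermitian) (hR : R.IsHermitian) (hRtr : R.trace = 1) :
    (1 / 2 : ℝ) * ((⨅ i, hP.eigenvalues i) * ((∑ i, |hR.eigenvalues i|) + 1)
        - (⨆ i, hP.eigenvalues i) * ((∑ i, |hR.eigenvalues i|) - 1))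
      ≤ ((P * Λ R).trace).re := by
  haveI : Nonempty (Fin d) := ⟨⟨0, hd⟩⟩
  set U := (hR.eigenvectorUnitary : Matrix (Fin d) (Fin d) ℂ) with hUdef
  set lam := hR.eigenvalues with hlam
  set Rp := U * Matrix.diagonal (fun i => ((max (lam i) 0 : ℝ) : ℂ)) * star U with hRpdef
  set Rm := U * Matrix.diagonal (fun i => ((max (-lam i) 0 : ℝ) : ℂ)) * star U with hRmdef
  have hRpP : Rp.PosSemidef := psd_conj _ fun i => Complex.zero_le_real.mpr (le_max_right _ _)
  have hRmP : Rm.PosSemidef := psd_conj _ fun i => Complex.zero_le_real.mpr (le_max_right _ _)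
  have hfun : (fun i => ((max (lam i) 0 : ℝ) : ℂ) - ((max (-lam i) 0 : ℝ) : ℂ))
      = (RCLike.ofReal ∘ lam) := by
    funext i
    rw [← Complex.ofReal_sub]
    rw [max_zero_sub_max_neg_zero_eq_self (lam i)]
    rfl
  have hsplit : R = Rp - Rm := by
    rw [hRpdef, hRmdef, ← Matrix.sub_mul, ← Matrix.mul_sub, Matrix.diagonal_sub, hfun]
    exact hR.spectral_theorem
  set p := ∑ i, max (lam i) 0 with hp
  set m := ∑ i, max (-lam i) 0 with hm
  set t := ∑ i, |lam i| with ht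
  have htrRp : Rp.trace = (p : ℂ) := by
    rw [hRpdef, trace_unitary_conj, Matrix.trace_diagonal, hp]
    push_cast
    rfl
  have htrRm : Rm.trace = (m : ℂ) := by
    rw [hRmdef, trace_unitary_conj, Matrix.trace_diagonal, hm]
    push_cast
    rfl
  have hpm : p + m = t := by
    rw [hp, hm, ht, ← Finset.sum_add_distrib]
    exact Finset.sum_congr rfl fun i _ => max_zero_add_max_neg_zero_eq_abs_self (lam i)
  have hpm1 : p - m = 1 := by
    have h5 : R.trace = ((p - m : ℝ) : ℂ) := by
      rw [hsplit, Matrix.trace_sub, htrRp, htrRm]; push_cast; ring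
    rw [hRtr] at h5
    exact_mod_cast h5.symm
  have hσp : (Λ Rp).PosSemidef := hpos _ hRpP
  have hσm : (Λ Rm).PosSemidef := hpos _ hRmP
  have htσp : (Λ Rp).trace.re = p := by rw [htp, htrRp, Complex.ofReal_re]
  have htσm : (Λ Rm).trace.re = m := by rw [htp, htrRm, Complex.ofReal_re]
  have hlow := trace_bound_low hP hσp
  have hhigh := trace_bound_high hP hσm
  rw [htσp] at hlow
  rw [htσm] at hhigh
  have hdecomp : ((P * Λ R).trace).re
      = ((P * Λ Rp).trace).re - ((P * Λ Rm).trace).re := by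
    rw [hsplit, map_sub, Matrix.mul_sub, Matrix.trace_sub, Complex.sub_re]
  rw [hdecomp]
  have hpv : p = (t + 1) / 2 := by linarith
  have hmv : m = (t - 1) / 2 := by linarith
  have hfin : (1 / 2 : ℝ) * ((⨅ i, hP.eigenvalues i) * (t + 1)
      - (⨆ i, hP.eigenvalues i) * (t - 1))
      = (⨅ i, hP.eigenvalues i) * p - (⨆ i, hP.eigenvalues i) * m := by
    rw [hpv, hmv]; ring
  rw [hfin]
  linarith
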